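/- Let S be a commutative ring, B = S[X], and let 𝓖 = ⊕ I_n W^n ⊆ B[W] be a Rees algebra generated by a finite set 𝓕 = {g_{n_i} W^{n_i}}. Then the smallest Diff-algebra (relative to S) containing 𝓖 is generated as a B-algebra by the finite set 𝓕' = {Δ^α(g_{n_i}) W^{n'_i − α} : g_{n_i} W^{n_i} ∈ 𝓕, 0 < n'_i ≤ n_i, 0 ≤ α < n'_i}. In particular every finitely generated Rees algebra over B admits a smallest finitely generated Diff-algebra extension. -/

import Mathlib

open Polynomial

/-- The Rees algebra of a filtration `I` of ideals of `B`. -/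
noncomputable def ReesAlg {B : Type*} [CommRing B] (I : ℕ → Ideal B) : Subalgebra B (Polynomial B) :=
  Algebra.adjoin B {p | ∃ n : ℕ, ∃ g ∈ I n, p = C g * X ^ n}

/-- A graded subalgebra `A ⊆ B[W]` (for `B = S[X]`) is a Diff-algebra relative to `S` if
its homogeneous pieces decrease and are stable under `b W^n ↦ Δ^α(b) W^{n-α}`. -/
def IsDiffAlg {S : Type*} [CommRing S]
    (A : Subalgebra (Polynomial S) (Polynomial (Polynomial S))) : Prop :=
  (∀ (b : Polynomial S) (k : ℕ),
    (C b * X ^ (k + 1) : Polynomial (Polynomial S)) ∈ A →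
      (C b * X ^ k : Polynomial (Polynomial S)) ∈ A) ∧
  (∀ (b : Polynomial S) (n α : ℕ), α ≤ n →
    (C b * X ^ n : Polynomial (Polynomial S)) ∈ A →
      (C (hasseDeriv α b) * X ^ (n - α) : Polynomial (Polynomial S)) ∈ A)

section Aux


variable {S : Type*} [CommRing S]

lemma constMem (A : Subalgebra (Polynomial S) (Polynomial (Polynomial S))) (b : Polynomial S) :
    (C b : Polynomial (Polynomial S)) ∈ A := by
  rw [← Polynomial.algebraMap_eq]; exact A.algebraMap_mem b

lemma descend {A : Subalgebra (Polynomial S) (Polynomial (Polynomial S))}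
    (hA : ∀ (b : Polynomial S) (k : ℕ),
      (C b * X ^ (k + 1) : Polynomial (Polynomial S)) ∈ A →
      (C b * X ^ k : Polynomial (Polynomial S)) ∈ A)
    (b : Polynomial S) :
    ∀ t s : ℕ, (C b * X ^ (s + t) : Polynomial (Polynomial S)) ∈ A →
      (C b * X ^ s : Polynomial (Polynomial S)) ∈ A := by
  intro t
  induction t with
  | zero => intro s hs; rwa [Nat.add_zero] at hs
  | succ t ih =>
      intro s hs
      rw [Nat.add_succ] at hs
      exact ih s (hA b (s + t) hs)

lemma keyMem {m : ℕ} (g : Fin m → Polynomial S) (n : Fin m → ℕ)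
    {p : Polynomial (Polynomial S)}
    (hp : p ∈ Algebra.adjoin (Polynomial S)
      {p | ∃ (i : Fin m) (n' α : ℕ), 0 < n' ∧ n' ≤ n i ∧ α < n' ∧
        p = (C (hasseDeriv α (g i)) * X ^ (n' - α) : Polynomial (Polynomial S))}) :
    ∀ k α j : ℕ, j + α ≤ k →
      (C (hasseDeriv α (p.coeff k)) * X ^ j : Polynomial (Polynomial S)) ∈
        Algebra.adjoin (Polynomial S)
          {p | ∃ (i : Fin m) (n' α : ℕ), 0 < n' ∧ n' ≤ n i ∧ α < n' ∧
            p = (C (hasseDeriv α (g i)) * X ^ (n' - α) : Polynomial (Polynomial S))} := by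
  set D := Algebra.adjoin (Polynomial S)
      {p | ∃ (i : Fin m) (n' α : ℕ), 0 < n' ∧ n' ≤ n i ∧ α < n' ∧
        p = (C (hasseDeriv α (g i)) * X ^ (n' - α) : Polynomial (Polynomial S))} with hDdef
  induction hp using Algebra.adjoin_induction with
  | mem x hx =>
      obtain ⟨i, n', α0, hn'pos, hn'le, hα0, rfl⟩ := hx
      intro k α j hj
      rcases eq_or_ne k (n' - α0) with rfl | he
      · rw [coeff_C_mul, coeff_X_pow, if_pos rfl, mul_one]
        have hcomp : hasseDeriv α (hasseDeriv α0 (g i))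
            = (α + α0).choose α • hasseDeriv (α + α0) (g i) := by
          have := congrArg (fun f => f (g i)) (hasseDeriv_comp (R := S) α α0)
          simpa using this
        rw [hcomp, map_nsmul, smul_mul_assoc]
        apply nsmul_mem
        rcases Nat.eq_zero_or_pos j with hj0 | hjpos
        · subst hj0; rw [pow_zero, mul_one]; exact constMem _ _
        · apply Algebra.subset_adjoin
          refine ⟨i, j + α + α0, α + α0, by omega, by omega, by omega, ?_⟩
          congr 1
          congr 1
          omega
      · rw [coeff_C_mul, coeff_X_pow, if_neg he, mul_zero, map_zero, map_zero, zero_mul]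
        exact zero_mem D
  | algebraMap r =>
      intro k α j hj
      rw [Polynomial.algebraMap_eq, coeff_C]
      rcases eq_or_ne k 0 with rfl | hk
      · obtain rfl : j = 0 := by omega
        obtain rfl : α = 0 := by omega
        simp only [if_pos rfl, hasseDeriv_zero', pow_zero, mul_one]
        exact constMem _ _
      · rw [if_neg hk, map_zero, map_zero, zero_mul]
        exact zero_mem D
  | add x y hx hy ihx ihy =>
      intro k α j hj
      rw [coeff_add, map_add, map_add, add_mul]
      exact add_mem (ihx k α j hj) (ihy k α j hj)
  | mul x y hx hy ihx ihy =>
      intro k α j hj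
      rw [coeff_mul, map_sum, map_sum, Finset.sum_mul]
      apply sum_mem
      intro ij hij
      rw [Finset.HasAntidiagonal.mem_antidiagonal] at hij
      rw [hasseDeriv_mul, map_sum, Finset.sum_mul]
      apply sum_mem
      intro βγ hβγ
      rw [Finset.HasAntidiagonal.mem_antidiagonal] at hβγ
      set j1 := min j (ij.1 - βγ.1) with hj1
      set j2 := j - j1 with hj2
      have hsplit : (C (hasseDeriv βγ.1 (x.coeff ij.1) * hasseDeriv βγ.2 (y.coeff ij.2))
            * X ^ j : Polynomial (Polynomial S))
          = (C (hasseDeriv βγ.1 (x.coeff ij.1)) * X ^ j1)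
            * (C (hasseDeriv βγ.2 (y.coeff ij.2)) * X ^ j2) := by
        rw [map_mul, mul_mul_mul_comm, ← pow_add]
        congr 2
        omega
      rw [hsplit]
      apply mul_mem
      · rcases le_or_gt βγ.1 ij.1 with h1 | h1
        · exact ihx ij.1 βγ.1 j1 (by omega)
        · have : j1 = 0 := by omega
          rw [this, pow_zero, mul_one]
          exact constMem _ _
      · rcases Nat.eq_zero_or_pos j2 with h2 | h2
        · rw [h2, pow_zero, mul_one]
          exact constMem _ _
        · exact ihy ij.2 βγ.2 j2 (by omega)

end Aux

/-- If the Rees algebra `𝓖 = ⊕ Iₙ Wⁿ ⊆ B[W]` (for `B = S[X]`) is generated by a finite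
set `𝓕 = {g_i W^{n_i}}`, then the `B`-subalgebra generated by the finite set
`𝓕' = {Δ^α(g_i) W^{n'_i - α} : 0 < n'_i ≤ n_i, 0 ≤ α < n'_i}` is the smallest
Diff-algebra relative to `S` containing `𝓖`. -/
theorem stmt_17 (S : Type*) [CommRing S] (I : ℕ → Ideal (Polynomial S))
    (h0 : I 0 = ⊤) (hmul : ∀ k s : ℕ, I k * I s ≤ I (k + s))
    (m : ℕ) (g : Fin m → Polynomial S) (n : Fin m → ℕ) (hn : ∀ i, 0 < n i)
    (hgI : ∀ i, g i ∈ I (n i))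
    (hgen : ReesAlg I = Algebra.adjoin (Polynomial S)
      {p | ∃ i : Fin m, p = (C (g i) * X ^ (n i) : Polynomial (Polynomial S))})
    (D : Subalgebra (Polynomial S) (Polynomial (Polynomial S)))
    (hD : D = Algebra.adjoin (Polynomial S)
      {p | ∃ (i : Fin m) (n' α : ℕ), 0 < n' ∧ n' ≤ n i ∧ α < n' ∧
        p = (C (hasseDeriv α (g i)) * X ^ (n' - α) : Polynomial (Polynomial S))}) :
    ReesAlg I ≤ D ∧ IsDiffAlg D ∧
      ∀ A : Subalgebra (Polynomial S) (Polynomial (Polynomial S)),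
        IsDiffAlg A → ReesAlg I ≤ A → D ≤ A := by
  subst hD
  refine ⟨?_, ⟨?_, ?_⟩, ?_⟩
  · rw [hgen]
    apply Algebra.adjoin_mono
    rintro p ⟨i, rfl⟩
    exact ⟨i, n i, 0, hn i, le_refl _, hn i, by rw [hasseDeriv_zero', Nat.sub_zero]⟩
  · intro b k hb
    have := keyMem g n hb (k + 1) 0 k (by omega)
    simpa [coeff_C_mul, coeff_X_pow, hasseDeriv_zero'] using this
  · intro b n0 α hα hb
    have := keyMem g n hb n0 α (n0 - α) (by omega)
    simpa [coeff_C_mul, coeff_X_pow] using this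
  · intro A hA hRees
    apply Algebra.adjoin_le
    rintro p ⟨i, n', α, hn'pos, hn'le, hα, rfl⟩
    have h1 : (C (g i) * X ^ (n i) : Polynomial (Polynomial S)) ∈ ReesAlg I :=
      Algebra.subset_adjoin ⟨n i, g i, hgI i, rfl⟩
    have h2 : (C (g i) * X ^ n' : Polynomial (Polynomial S)) ∈ A := by
      apply descend hA.1 (g i) (n i - n') n'
      rw [show n' + (n i - n') = n i by omega]
      exact hRees h1
    exact hA.2 (g i) n' α (le_of_lt hα) h2
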